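/- For any self-admissible word ω of length n, the left endpoint of the parameter cylinder of its lexicographic successor ω⁺ in Λ_n equals the right endpoint of the parameter cylinder of ω: β̲(ω⁺) = β̄(ω). Consequently, the parameter cylinders I_n^P(ω) for ω ∈ Λ_n are pairwise disjoint. -/

import Mathlib

open Filter Topology

/-- The β-transformation `T_β x = βx - ⌊βx⌋`. -/
noncomputable def Tb (β : ℝ) (x : ℝ) : ℝ := β * x - ⌊β * x⌋

/-- The (n+1)-st digit `ε_{n+1}(x, β) = ⌊β T_β^{n} x⌋` of the β-expansion of `x`. -/
noncomputable def digit (β : ℝ) (x : ℝ) (n : ℕ) : ℕ := (⌊β * (Tb β)^[n] x⌋).toNat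

/-- Strict lexicographical order on sequences of naturals. -/
def lexLt (a b : ℕ → ℕ) : Prop := ∃ k, (∀ j, j < k → a j = b j) ∧ a k < b k

def lexLe (a b : ℕ → ℕ) : Prop := lexLt a b ∨ a = b

/-- A finite word padded with zeros to an infinite sequence. -/
def pad {n : ℕ} (ω : Fin n → ℕ) : ℕ → ℕ := fun k => if h : k < n then ω ⟨k, h⟩ else 0

/-- The prefix of length `m` of a padded word, again padded with zeros. -/
def trunc {n : ℕ} (ω : Fin n → ℕ) (m : ℕ) : ℕ → ℕ := fun k => if k < m then pad ω k else 0

/-- A word `ω` of length `n` is self-admissible if `σ^i ω ≤_lex (ω_1, …, ω_{n-i})`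
for all `1 ≤ i < n` (comparison after padding with zeros). -/
def selfAdmissible {n : ℕ} (ω : Fin n → ℕ) : Prop :=
  ∀ i, 1 ≤ i → i < n → lexLe (fun k => pad ω (k + i)) (trunc ω (n - i))

/-- Lexicographic order on words of the same length. -/
def wordLt {n : ℕ} (ω ω' : Fin n → ℕ) : Prop := lexLt (pad ω) (pad ω')

def wordLe {n : ℕ} (ω ω' : Fin n → ℕ) : Prop := wordLt ω ω' ∨ ω = ω'

/-- The recurrence time `τ(ω)`: the least `1 ≤ k < n` with
`σ^k(ω_1,…,ω_n) = (ω_1,…,ω_{n-k})`, and `n` if there is no such `k`. -/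
noncomputable def tau {n : ℕ} (ω : Fin n → ℕ) : ℕ :=
  sInf ({k | 1 ≤ k ∧ k < n ∧ ∀ j, j < n - k → pad ω (k + j) = pad ω j} ∪ {n})

/-- The cylinder of the word `ω` in the parameter space `(1, ∞)`. -/
def cylP (n : ℕ) (ω : Fin n → ℕ) : Set ℝ := {β : ℝ | 1 < β ∧ ∀ i : Fin n, digit β 1 i = ω i}

/-- The first `n` digits of the β-expansion of `1`. -/
noncomputable def prefixW (β : ℝ) (n : ℕ) : Fin n → ℕ := fun i => digit β 1 i

/-- The `n`-th recurrence time `τ_n(β)` of `β`. -/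
noncomputable def tauN (β : ℝ) (n : ℕ) : ℕ := tau (prefixW β n)

/-- `t_n(β) = n - ⌊n / τ_n(β)⌋ τ_n(β)`. -/
noncomputable def tN (β : ℝ) (n : ℕ) : ℕ := n - (n / tauN β n) * tauN β n

/-- Left endpoint `β̲_n` of the `n`-th cylinder of `β` in the parameter space. -/
noncomputable def lEnd (β : ℝ) (n : ℕ) : ℝ := sInf (cylP n (prefixW β n))

/-- Right endpoint `β̄_n` of the `n`-th cylinder of `β` in the parameter space. -/
noncomputable def rEnd (β : ℝ) (n : ℕ) : ℝ := sSup (cylP n (prefixW β n))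

/-- The set `Σ_β^n` of β-admissible words of length `n`. -/
def SigmaB (β : ℝ) (n : ℕ) : Set (Fin n → ℕ) :=
  {w | ∃ x : ℝ, 0 ≤ x ∧ x < 1 ∧ ∀ i : Fin n, digit β x i = w i}

open Classical in
/-- The infinite β-expansion `ε*(1, β)` of `1`. -/
noncomputable def epsStar (β : ℝ) : ℕ → ℕ :=
  if h : ∃ m, digit β 1 m ≠ 0 ∧ ∀ k, m < k → digit β 1 k = 0 then
    fun n =>
      if n % (h.choose + 1) = h.choose then digit β 1 h.choose - 1
      else digit β 1 (n % (h.choose + 1))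
  else digit β 1

-- auxiliary lemmas

lemma Tb_fract (β x : ℝ) : Tb β x = Int.fract (β * x) := rfl

lemma iter_nonneg (β x : ℝ) (hx : 0 ≤ x) : ∀ k, 0 ≤ (Tb β)^[k] x
  | 0 => hx
  | (k+1) => by
      rw [Function.iterate_succ_apply', Tb_fract]
      exact Int.fract_nonneg _

lemma key_mono (β β' x y : ℝ) (hβ : 0 < β) (hle : β ≤ β') (hx : 0 ≤ x) (hxy : x ≤ y) :
    ∀ k, (∀ j, j < k → digit β x j = digit β' y j) →
      β * (Tb β)^[k] x ≤ β' * (Tb β')^[k] y := by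
  intro k
  induction k with
  | zero =>
    intro _
    simpa using mul_le_mul hle hxy hx (hβ.trans_le hle).le
  | succ k ih =>
    intro h
    have hIH := ih (fun j hj => h j (hj.trans (Nat.lt_succ_self k)))
    have hX0 : 0 ≤ (Tb β)^[k] x := iter_nonneg β x hx k
    have hfl0 : (0:ℤ) ≤ ⌊β * (Tb β)^[k] x⌋ := Int.floor_nonneg.mpr (mul_nonneg hβ.le hX0)
    have hfl0' : (0:ℤ) ≤ ⌊β' * (Tb β')^[k] y⌋ := le_trans hfl0 (Int.floor_le_floor hIH)
    have hdg := h k (Nat.lt_succ_self k)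
    simp only [digit] at hdg
    have hfe : ⌊β * (Tb β)^[k] x⌋ = ⌊β' * (Tb β')^[k] y⌋ := by omega
    have hXle : (Tb β)^[k+1] x ≤ (Tb β')^[k+1] y := by
      rw [Function.iterate_succ_apply', Function.iterate_succ_apply']
      show β * (Tb β)^[k] x - (⌊β * (Tb β)^[k] x⌋:ℝ) ≤ β' * (Tb β')^[k] y - (⌊β' * (Tb β')^[k] y⌋:ℝ)
      rw [hfe]
      exact sub_le_sub_right hIH _
    have hX0' : 0 ≤ (Tb β)^[k+1] x := iter_nonneg β x hx _
    exact mul_le_mul hle hXle hX0' (hβ.trans_le hle).le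

lemma digit_le (β β' x y : ℝ) (hβ : 0 < β) (hle : β ≤ β') (hx : 0 ≤ x) (hxy : x ≤ y)
    (k : ℕ) (h : ∀ j, j < k → digit β x j = digit β' y j) :
    digit β x k ≤ digit β' y k := by
  have := key_mono β β' x y hβ hle hx hxy k h
  exact Int.toNat_le_toNat (Int.floor_le_floor this)

lemma prefix_mono (n : ℕ) {β β' : ℝ} (hβ : 0 < β) (hle : β ≤ β') :
    ¬ lexLt (pad (prefixW β' n)) (pad (prefixW β n)) := by
  rintro ⟨k, hagree, hklt⟩
  by_cases hk : k < n
  · simp only [pad, prefixW, hk, dif_pos] at hklt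
    have hle2 : digit β 1 k ≤ digit β' 1 k := by
      refine digit_le β β' 1 1 hβ hle zero_le_one le_rfl k ?_
      intro j hj
      have hjn : j < n := hj.trans hk
      have := hagree j hj
      simpa only [pad, prefixW, hjn, dif_pos] using this.symm
    omega
  · simp [pad, hk] at hklt

lemma lex_total {a b : ℕ → ℕ} (h : a ≠ b) : lexLt a b ∨ lexLt b a := by
  have hex : ∃ k, a k ≠ b k := Function.ne_iff.mp h
  have hk0 := Nat.find_spec hex
  have hmin : ∀ j, j < Nat.find hex → a j = b j :=
    fun j hj => not_not.mp (Nat.find_min hex hj)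
  rcases lt_or_gt_of_ne hk0 with h' | h'
  · exact Or.inl ⟨Nat.find hex, hmin, h'⟩
  · exact Or.inr ⟨Nat.find hex, fun j hj => (hmin j hj).symm, h'⟩

lemma pad_inj {n : ℕ} {u v : Fin n → ℕ} (h : pad u = pad v) : u = v := by
  funext i
  have := congrFun h i.val
  simpa only [pad, i.isLt, dif_pos, Fin.eta] using this

lemma prefix_selfAdmissible (n : ℕ) {β : ℝ} (hβ : 1 < β) :
    selfAdmissible (prefixW β n) := by
  intro i hi1 hin
  set x := (Tb β)^[i] 1 with hxdef
  have hβ0 : 0 < β := lt_trans one_pos hβ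
  have hx0 : 0 ≤ x := iter_nonneg β 1 zero_le_one i
  have hx1 : x ≤ 1 := by
    obtain ⟨j, rfl⟩ := Nat.exists_eq_add_of_le hi1
    rw [hxdef, add_comm, Function.iterate_succ_apply', Tb_fract]
    exact (Int.fract_lt_one _).le
  have hdig : ∀ k, digit β x k = digit β 1 (k + i) := by
    intro k
    simp only [digit, hxdef, ← Function.iterate_add_apply]
  by_cases hall : ∀ k, k < n - i → digit β x k = digit β 1 k
  · right
    funext k
    simp only [trunc, pad, prefixW]
    by_cases hk : k < n - i
    · have hkn : k + i < n := Nat.add_lt_of_lt_sub hk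
      have hkn' : k < n := lt_of_le_of_lt (Nat.le_add_right k i) hkn
      simp only [hkn, dif_pos, hk, if_pos, hkn']
      rw [← hall k hk, hdig k]
    · have hkn : ¬ k + i < n := by omega
      simp [hk, hkn]
  · left
    push_neg at hall
    have hex : ∃ k, k < n - i ∧ digit β x k ≠ digit β 1 k := hall
    set k0 := Nat.find hex with hk0def
    obtain ⟨hk0n, hk0ne⟩ := Nat.find_spec hex
    have hmin : ∀ j, j < k0 → digit β x j = digit β 1 j := by
      intro j hj
      have := Nat.find_min hex hj
      push_neg at this
      exact this (lt_trans hj hk0n)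
    have hlt : digit β x k0 < digit β 1 k0 :=
      lt_of_le_of_ne (digit_le β β x 1 hβ0 le_rfl hx0 hx1 k0 hmin) hk0ne
    refine ⟨k0, ?_, ?_⟩
    · intro j hj
      have hjn : j < n - i := lt_trans hj hk0n
      have hjin : j + i < n := Nat.add_lt_of_lt_sub hjn
      have hjn' : j < n := lt_of_le_of_lt (Nat.le_add_right j i) hjin
      simp only [trunc, pad, prefixW, hjin, dif_pos, hjn, if_pos, hjn']
      rw [← hmin j hj, hdig j]
    · have hkin : k0 + i < n := Nat.add_lt_of_lt_sub hk0n
      have hkn' : k0 < n := lt_of_le_of_lt (Nat.le_add_right k0 i) hkin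
      simp only [trunc, pad, prefixW, hkin, dif_pos, hk0n, if_pos, hkn']
      rw [← hdig k0]
      rw [if_pos (show k0 < n - i from hk0n)]
      exact hlt

lemma prefix_eq {n : ℕ} {β : ℝ} {ω : Fin n → ℕ} (h : β ∈ cylP n ω) :
    prefixW β n = ω := funext fun i => h.2 i

lemma cyl_bddAbove (n : ℕ) (hn : 0 < n) (ω : Fin n → ℕ) : BddAbove (cylP n ω) := by
  refine ⟨(ω ⟨0, hn⟩ : ℝ) + 1, ?_⟩
  rintro β ⟨hβ, hd⟩
  have h0 := hd ⟨0, hn⟩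
  have hfl : (1:ℤ) ≤ ⌊β⌋ := by
    rw [Int.le_floor]; exact_mod_cast hβ.le
  have hdig0 : digit β 1 0 = ⌊β⌋.toNat := by
    simp [digit, Tb]
  have : (⌊β⌋ : ℝ) ≤ (ω ⟨0, hn⟩ : ℝ) := by
    have : ⌊β⌋.toNat = ω ⟨0, hn⟩ := by rw [← hdig0]; exact h0
    have h2 : ⌊β⌋ = (ω ⟨0, hn⟩ : ℤ) := by omega
    exact_mod_cast h2.le
  have h3 := Int.lt_floor_add_one β
  linarith

theorem succ_left_endpoint_eq_right_endpoint (n : ℕ) (ω ωp : Fin n → ℕ)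
    (hsa : selfAdmissible ω) (hsap : selfAdmissible ωp) (hlt : wordLt ω ωp)
    (hleast : ∀ u : Fin n → ℕ, selfAdmissible u → wordLt ω u → wordLe ωp u)
    (hne : (cylP n ω).Nonempty) (hnep : (cylP n ωp).Nonempty) :
    sInf (cylP n ωp) = sSup (cylP n ω) ∧
      ∀ u v : Fin n → ℕ, selfAdmissible u → selfAdmissible v → u ≠ v →
        Disjoint (cylP n u) (cylP n v) := by
  classical
  have hdisj : ∀ u v : Fin n → ℕ, selfAdmissible u → selfAdmissible v → u ≠ v →
      Disjoint (cylP n u) (cylP n v) := by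
    intro u v _ _ huv
    rw [Set.disjoint_left]
    rintro β ⟨hβ, hu⟩ ⟨_, hv⟩
    exact huv (funext fun i => (hu i).symm.trans (hv i))
  refine ⟨?_, hdisj⟩
  rcases Nat.eq_zero_or_pos n with h0 | hn
  · subst h0
    obtain ⟨k, _, hk2⟩ := hlt
    simp [pad] at hk2
  have hba : BddAbove (cylP n ω) := cyl_bddAbove n hn ω
  have hbb : BddBelow (cylP n ωp) := ⟨1, fun b hb => hb.1.le⟩
  have hSle : ∀ a ∈ cylP n ω, ∀ b ∈ cylP n ωp, a ≤ b := by
    intro a ha b hb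
    by_contra hcon
    push_neg at hcon
    have hmono := prefix_mono n (lt_trans one_pos hb.1) hcon.le
    rw [prefix_eq ha, prefix_eq hb] at hmono
    exact hmono hlt
  have h1 : sSup (cylP n ω) ≤ sInf (cylP n ωp) :=
    le_csInf hnep fun b hb => csSup_le hne fun a ha => hSle a ha b hb
  have h2 : ¬ sSup (cylP n ω) < sInf (cylP n ωp) := by
    intro hgap
    set β := (sSup (cylP n ω) + sInf (cylP n ωp)) / 2 with hβdef
    obtain ⟨a0, ha0⟩ := hne
    obtain ⟨b0, hb0⟩ := hnep
    have hsupβ : sSup (cylP n ω) < β := left_lt_add_div_two.mpr hgap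
    have hβinf : β < sInf (cylP n ωp) := add_div_two_lt_right.mpr hgap
    have ha0sup : a0 ≤ sSup (cylP n ω) := le_csSup hba ha0
    have hβ1 : 1 < β := lt_of_lt_of_le ha0.1 (ha0sup.trans hsupβ.le)
    have hu : selfAdmissible (prefixW β n) := prefix_selfAdmissible n hβ1
    have hune : prefixW β n ≠ ω := by
      intro h
      have hmem : β ∈ cylP n ω := ⟨hβ1, fun i => congrFun h i⟩
      exact absurd (le_csSup hba hmem) (not_le.mpr hsupβ)
    have hωu : wordLt ω (prefixW β n) := by
      have hnlt : ¬ lexLt (pad (prefixW β n)) (pad ω) := by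
        have hmono := prefix_mono n (lt_trans one_pos ha0.1) (ha0sup.trans hsupβ.le)
        rwa [prefix_eq ha0] at hmono
      have hpne : pad ω ≠ pad (prefixW β n) := fun h => hune (pad_inj h).symm
      exact (lex_total hpne).resolve_right hnlt
    obtain hpu | hpu := hleast (prefixW β n) hu hωu
    · have hnlt : ¬ lexLt (pad ωp) (pad (prefixW β n)) := by
        have hb0inf : β ≤ b0 := hβinf.le.trans (csInf_le hbb hb0)
        have hmono := prefix_mono n (lt_trans one_pos hβ1) hb0inf
        rwa [prefix_eq hb0] at hmono
      exact hnlt hpu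
    · have hmem : β ∈ cylP n ωp := ⟨hβ1, fun i => (congrFun hpu i).symm⟩
      exact absurd (csInf_le hbb hmem) (not_le.mpr hβinf)
  exact le_antisymm h1 (not_lt.mp h2) |>.symm
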